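/- Consider AMSGrad run for T iterations on a sequence of convex differentiable losses ℓ_t : ℝ^d → ℝ with gradients g_t = ∇ℓ_t(w_t), first-moment parameters β_{1,t} = β_1/√t with β_1 ∈ (0,1), constant second-moment parameter β_2 ∈ (0,1) with β_1² < β_2, and updates m_{t,i} = β_{1,t} m_{t-1,i} + (1−β_{1,t}) g_{t,i} with m_0 = 0, v_{t,i} = (1−β_2) Σ_{s=1}^t β_2^{t−s} g_{s,i}², v̂_{t,i} = max_{1≤s≤t} v_{s,i}, and w_{t+1,i} = w_{t,i} − γ_t m_{t,i}/√(v̂_{t,i}), where γ_t = α_t/(1 − ∏_{s=1}^t β_{1,s}) with constant α_t ≡ γ > 0. Assume: (i) |w_{t,i} − w*_i| ≤ D for all t, i, where w* is any comparator; (ii) |g_{t,i}| ≤ G for all t, i; (iii) v̂_{t,i} > 0 and the sequence √(v̂_{t,i})/α_t is non-decreasing in t for each i. Then the average optimality gap satisfies (1/T) Σ_{t=1}^T (ℓ_t(w_t) − ℓ_t(w*)) ≤ d D² G / (2 T γ (1−β_1)) + 2 d D G β_1 / ((1−β_1)√T) + d G γ C(β_1,β_2) / (2(1−β_1)), where C(β_1,β_2)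 = β_2 / ((1−β_2)(β_2 − β_1²)). -/

import Mathlib

open Finset

/-! ### Auxiliary definitions and lemmas -/

noncomputable def auxP (β1 : ℝ) (t : ℕ) : ℝ := ∏ s ∈ Icc 1 t, (β1 / Real.sqrt s)

lemma auxP_one (β1 : ℝ) : auxP β1 1 = β1 := by
  simp [auxP]

lemma auxP_succ (β1 : ℝ) (t : ℕ) : auxP β1 (t+1) = auxP β1 t * (β1 / Real.sqrt ((t+1 : ℕ))) := by
  rw [auxP, auxP, Finset.prod_Icc_succ_top (by omega)]

lemma aux_sqrt_one_le (t : ℕ) (ht : 1 ≤ t) : 1 ≤ Real.sqrt t := by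
  rw [show (1:ℝ) = Real.sqrt 1 from Real.sqrt_one.symm]
  exact Real.sqrt_le_sqrt (by exact_mod_cast ht)

lemma aux_b_pos (β1 : ℝ) (hβ1 : 0 < β1) (t : ℕ) (ht : 1 ≤ t) : 0 < β1 / Real.sqrt t :=
  div_pos hβ1 (lt_of_lt_of_le one_pos (aux_sqrt_one_le t ht))

lemma aux_b_le (β1 : ℝ) (hβ1 : 0 < β1) (t : ℕ) (ht : 1 ≤ t) : β1 / Real.sqrt t ≤ β1 := by
  rw [div_le_iff₀ (by linarith [aux_sqrt_one_le t ht])]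
  nlinarith [aux_sqrt_one_le t ht]

lemma auxP_bounds (β1 : ℝ) (hβ1 : 0 < β1) (hβ1' : β1 < 1) :
    ∀ t, 1 ≤ t → 0 < auxP β1 t ∧ auxP β1 t ≤ β1 := by
  intro t ht
  induction t, ht using Nat.le_induction with
  | base => rw [auxP_one]; exact ⟨hβ1, le_rfl⟩
  | succ n hn ih =>
    rw [auxP_succ]
    constructor
    · exact mul_pos ih.1 (aux_b_pos β1 hβ1 (n+1) (by omega))
    · calc auxP β1 n * (β1 / Real.sqrt ((n+1:ℕ))) ≤ 1 * β1 := by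
            apply mul_le_mul ?_ (aux_b_le β1 hβ1 (n+1) (by omega))
              (aux_b_pos β1 hβ1 (n+1) (by omega)).le zero_le_one
            linarith [ih.2]
        _ = β1 := one_mul β1

lemma auxP_le2 (β1 : ℝ) (hβ1 : 0 < β1) (hβ1' : β1 < 1) (t : ℕ) (ht : 2 ≤ t) :
    auxP β1 t ≤ β1 * (β1 / Real.sqrt t) := by
  obtain ⟨n, rfl⟩ : ∃ n, t = n + 1 := ⟨t - 1, by omega⟩
  rw [auxP_succ]
  apply mul_le_mul_of_nonneg_right (auxP_bounds β1 hβ1 hβ1' n (by omega)).2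
    (aux_b_pos β1 hβ1 (n+1) (by omega)).le

lemma aux_quad' (β1 u : ℝ) (hu0 : 0 ≤ u) (hu2 : u^2 ≤ 1/2) :
    0 ≤ u^2*β1^2 - u*β1 + 1 - u := by
  have hu34 : u ≤ 3/4 := by nlinarith
  nlinarith [sq_nonneg (u*β1 - 1/2)]

lemma aux_key2 (β1 : ℝ) (hβ1 : 0 < β1) (hβ1' : β1 < 1) (t : ℕ) (ht : 2 ≤ t) :
    1 - β1 ≤ (1 - auxP β1 t) * (1 - β1 / Real.sqrt t) := by
  set u : ℝ := (Real.sqrt t)⁻¹ with hu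
  have hst : 1 ≤ Real.sqrt t := aux_sqrt_one_le t (by omega)
  have hst0 : 0 < Real.sqrt t := by linarith
  have hu0 : 0 < u := by positivity
  have hu2 : u^2 ≤ 1/2 := by
    rw [hu, inv_pow, Real.sq_sqrt (by positivity)]
    rw [inv_le_comm₀ (by positivity) (by norm_num)]
    norm_num
    exact_mod_cast ht
  have hbu : β1 / Real.sqrt t = β1 * u := by rw [hu, div_eq_mul_inv]
  have hPle : auxP β1 t ≤ β1 * (β1 * u) := by
    rw [← hbu]; exact auxP_le2 β1 hβ1 hβ1' t ht
  have hquad := aux_quad' β1 u hu0.le hu2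
  have hbu1 : β1 * u < 1 := by
    rw [← hbu]; calc β1 / Real.sqrt t ≤ β1 := aux_b_le β1 hβ1 t (by omega)
      _ < 1 := hβ1'
  have step1 : (1 - β1*(β1*u)) * (1 - β1*u) ≤ (1 - auxP β1 t) * (1 - β1/Real.sqrt t) := by
    rw [hbu]
    apply mul_le_mul_of_nonneg_right (by linarith) (by linarith)
  refine le_trans ?_ step1
  nlinarith [hquad, hβ1]

lemma aux_sqrt_sum : ∀ T : ℕ, ∑ t ∈ Icc 1 T, (Real.sqrt t)⁻¹ ≤ 2 * Real.sqrt T := by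
  intro T
  induction T with
  | zero => simp
  | succ n ih =>
    rw [Finset.sum_Icc_succ_top (by omega)]
    have hs : 0 < Real.sqrt (n+1:ℕ) := by
      rw [Real.sqrt_pos]; push_cast; positivity
    have hmul : Real.sqrt n * Real.sqrt (n+1:ℕ) ≤ (n:ℝ) + 1/2 := by
      rw [← Real.sqrt_mul (by positivity)]
      rw [show ((n:ℝ) + 1/2) = Real.sqrt (((n:ℝ)+1/2)^2) from (Real.sqrt_sq (by positivity)).symm]
      apply Real.sqrt_le_sqrt
      push_cast
      nlinarith
    have hsq : Real.sqrt (n+1:ℕ) * Real.sqrt (n+1:ℕ) = (n:ℝ)+1 := by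
      rw [Real.mul_self_sqrt (by positivity)]; push_cast; ring
    have h1 : (Real.sqrt (n+1:ℕ))⁻¹ ≤ 2 * Real.sqrt (n+1:ℕ) - 2 * Real.sqrt n := by
      rw [inv_le_iff_one_le_mul₀' hs]
      nlinarith
    linarith

lemma aux_rec (β2 : ℝ) (f : ℕ → ℝ) (t : ℕ) :
    ∑ s ∈ Icc 1 (t+1), β2^(t+1-s) * f s = β2 * ∑ s ∈ Icc 1 t, β2^(t-s)*f s + f (t+1) := by
  rw [Finset.sum_Icc_succ_top (by omega), Finset.mul_sum]
  simp only [Nat.sub_self, pow_zero, one_mul]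
  congr 1
  refine Finset.sum_congr rfl fun s hs => ?_
  have h : s ≤ t := (Finset.mem_Icc.mp hs).2
  have : t + 1 - s = (t - s) + 1 := by omega
  rw [this, pow_succ]
  ring

lemma aux_geom (β2 : ℝ) (h0 : 0 ≤ β2) (h1 : β2 < 1) :
    ∀ s : ℕ, (1-β2) * ∑ u ∈ Icc 1 s, β2^(s-u) ≤ 1 := by
  intro s
  induction s with
  | zero => simp
  | succ n ih =>
    have := aux_rec β2 (fun _ => (1:ℝ)) n
    simp only [mul_one] at this
    rw [this]
    nlinarith

lemma aux_sq_combo (β1 β2 b x y : ℝ) (h1 : 0 < β1) (h2 : β1^2 < β2) (h2' : β2 < 1)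
    (hb0 : 0 ≤ b) (hb : b ≤ β1) (hb1 : b ≤ 1) :
    (b*x + (1-b)*y)^2 ≤ β2*x^2 + (β2/(β2-β1^2))*y^2 := by
  have hpos : 0 < β2 - β1^2 := by linarith
  have habs : |b*x + (1-b)*y| ≤ β1*|x| + |y| := by
    calc |b*x + (1-b)*y| ≤ |b*x| + |(1-b)*y| := abs_add_le _ _
    _ = b*|x| + (1-b)*|y| := by rw [abs_mul, abs_mul, abs_of_nonneg hb0, abs_of_nonneg (sub_nonneg.mpr hb1)]
    _ ≤ β1*|x| + |y| := by nlinarith [abs_nonneg x, abs_nonneg y]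
  have h3 : (b*x + (1-b)*y)^2 ≤ (β1*|x| + |y|)^2 := by
    rw [← sq_abs (b*x + (1-b)*y)]
    apply pow_le_pow_left₀ (abs_nonneg _) habs
  refine h3.trans ?_
  rw [← sq_abs x, ← sq_abs y]
  have key : 0 ≤ (β2*|x|^2 + (β2/(β2-β1^2))*|y|^2 - (β1*|x| + |y|)^2) * (β2-β1^2) := by
    have h4 := sq_nonneg ((β2-β1^2)*|x| - β1*|y|)
    have this2 : (β2/(β2-β1^2)) * (β2-β1^2) * |y|^2 = β2 * |y|^2 := by
      field_simp
    nlinarith [h4, this2]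
  nlinarith [key, hpos]

lemma aux_abel (T : ℕ) (hT : 1 ≤ T) (Δ x b : ℕ → ℝ) (D β1 : ℝ) (hβ1 : β1 < 1)
    (hb1 : b 1 = β1)
    (hb : ∀ t, 1 ≤ t → t ≤ T → 0 ≤ b t ∧ b t ≤ β1)
    (hbmono : ∀ t, 1 ≤ t → t + 1 ≤ T → b (t+1) ≤ b t)
    (hx0 : ∀ t, 1 ≤ t → t ≤ T → 0 ≤ x t)
    (hxmono : ∀ t, 1 ≤ t → t + 1 ≤ T → x t ≤ x (t+1))
    (hΔ : ∀ t, 1 ≤ t → t ≤ T → Δ t ^ 2 ≤ D^2) :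
    ∑ t ∈ Icc 1 T, (Δ t^2 - Δ (t+1)^2) * (x t/(1-b t)) ≤ D^2 * x T / (1-β1) := by
  have key : ∀ n, 1 ≤ n → n ≤ T →
      ∑ t ∈ Icc 1 n, (Δ t^2 - Δ (t+1)^2) * (x t/(1-b t)) ≤
        D^2 * x n / (1-β1) - Δ (n+1)^2 * (x n/(1-b n)) := by
    intro n hn
    induction n, hn using Nat.le_induction with
    | base =>
      intro h1T
      rw [show Icc 1 1 = {1} from rfl, Finset.sum_singleton, hb1]
      have hD2 := hΔ 1 le_rfl h1T
      have hx := hx0 1 le_rfl h1T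
      have hden : 0 < 1 - β1 := by linarith
      have e : (Δ 1^2 - Δ 2^2) * (x 1/(1-β1)) = Δ 1^2 * (x 1 /(1-β1)) - Δ 2^2 * (x 1/(1-β1)) := by ring
      rw [e]
      have : Δ 1 ^2 * (x 1/(1-β1)) ≤ D^2 * x 1 / (1-β1) := by
        rw [mul_div_assoc]
        apply mul_le_mul_of_nonneg_right hD2 (by positivity)
      linarith
    | succ n hn ih =>
      intro hnT
      have hnT' : n ≤ T := by omega
      have ihn := ih hnT'
      rw [Finset.sum_Icc_succ_top (by omega)]
      have hbn := hb n (by omega) hnT'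
      have hbn1 := hb (n+1) (by omega) hnT
      have hdenn : 0 < 1 - b n := by linarith
      have hdenn1 : 0 < 1 - b (n+1) := by linarith
      have hxm := hxmono n (by omega) hnT
      have hxn := hx0 n (by omega) hnT'
      have hxn1 := hx0 (n+1) (by omega) hnT
      have hΔn1 := hΔ (n+1) (by omega) hnT
      have step : Δ (n+1)^2 * (x (n+1)/(1-b (n+1))) - Δ (n+1)^2 * (x n/(1-b n)) ≤
          D^2 * x (n+1) / (1-β1) - D^2 * x n / (1-β1) := by
        have hy : x (n+1)/(1-b (n+1)) - x n/(1-b n) ≤ (x (n+1) - x n)/(1 - b n) := by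
          have h1 : x (n+1)/(1-b (n+1)) ≤ x (n+1)/(1-b n) := by
            apply div_le_div_of_nonneg_left hxn1 hdenn
            have := hbmono n (by omega) hnT
            linarith
          have h2 : x (n+1)/(1-b n) - x n/(1-b n) = (x (n+1) - x n)/(1-b n) := by ring
          linarith
        have hy2 : (x (n+1) - x n)/(1-b n) ≤ (x (n+1) - x n)/(1-β1) := by
          apply div_le_div_of_nonneg_left (by linarith) (by linarith)
          linarith
        have hM : 0 ≤ (x (n+1) - x n)/(1-β1) := by
          apply div_nonneg (by linarith) (by linarith)
        have hΔ0 : (0:ℝ) ≤ Δ (n+1)^2 := sq_nonneg _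
        have hcomb : Δ (n+1)^2 * (x (n+1)/(1-b (n+1)) - x n/(1-b n)) ≤
            D^2 * ((x (n+1) - x n)/(1-β1)) := by
          calc Δ (n+1)^2 * (x (n+1)/(1-b (n+1)) - x n/(1-b n))
              ≤ Δ (n+1)^2 * ((x (n+1) - x n)/(1-β1)) := by
                apply mul_le_mul_of_nonneg_left (hy.trans hy2) hΔ0
            _ ≤ D^2 * ((x (n+1) - x n)/(1-β1)) := by
                apply mul_le_mul_of_nonneg_right hΔn1 hM
        have e1 : D^2 * ((x (n+1) - x n)/(1-β1)) = D^2 * x (n+1)/(1-β1) - D^2 * x n/(1-β1) := by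
          ring
        nlinarith [hcomb]
      have expand : (Δ (n+1)^2 - Δ (n+2)^2) * (x (n+1)/(1-b (n+1))) =
          Δ (n+1)^2 * (x (n+1)/(1-b (n+1))) - Δ (n+2)^2 * (x (n+1)/(1-b (n+1))) := by ring
      rw [expand]
      linarith
  have h := key T hT le_rfl
  have hbT := hb T hT le_rfl
  have : 0 ≤ Δ (T+1)^2 * (x T/(1-b T)) := by
    apply mul_nonneg (sq_nonneg _)
    apply div_nonneg (hx0 T hT le_rfl) (by linarith)
  linarith

lemma aux_convex_grad {d : ℕ} (f : EuclideanSpace ℝ (Fin d) → ℝ)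
    (gr x y : EuclideanSpace ℝ (Fin d))
    (hf : ConvexOn ℝ Set.univ f) (hg : HasGradientAt f gr x) :
    f x - f y ≤ ∑ i, gr i * (x i - y i) := by
  set φ : ℝ → ℝ := fun s => f (x + s • (y - x)) with hφdef
  have hφeq : φ = f ∘ (AffineMap.lineMap x y : ℝ →ᵃ[ℝ] _) := by
    funext s
    simp only [hφdef, Function.comp_apply, AffineMap.lineMap_apply_module]
    congr 1
    module
  have hφconv : ConvexOn ℝ Set.univ φ := by
    have := hf.comp_affineMap (AffineMap.lineMap x y : ℝ →ᵃ[ℝ] _)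
    rw [Set.preimage_univ] at this
    rw [hφeq]; exact this
  have hcurve : HasDerivAt (fun s : ℝ => x + s • (y - x)) (y - x) 0 := by
    simpa using ((hasDerivAt_id (0:ℝ)).smul_const (y - x)).const_add x
  have hfd : HasFDerivAt f ((InnerProductSpace.toDual ℝ _) gr : EuclideanSpace ℝ (Fin d) →L[ℝ] ℝ) x := hg
  have hfd' : HasFDerivAt f ((InnerProductSpace.toDual ℝ _) gr : EuclideanSpace ℝ (Fin d) →L[ℝ] ℝ)
      (x + (0:ℝ) • (y - x)) := by simpa using hfd
  have hcomp : HasDerivAt φ (inner ℝ gr (y - x) : ℝ) 0 := by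
    have h := hfd'.comp_hasDerivAt (0:ℝ) hcurve
    simp only [InnerProductSpace.toDual_apply_apply] at h
    exact h
  have hslope := hφconv.le_slope_of_hasDerivAt (Set.mem_univ (0:ℝ)) (Set.mem_univ (1:ℝ))
    (by norm_num) hcomp
  rw [slope_def_field] at hslope
  have hφ0 : φ 0 = f x := by simp [hφdef]
  have hφ1 : φ 1 = f y := by simp [hφdef]
  have hinner : (inner ℝ gr (y - x) : ℝ) = ∑ i, gr i * (y i - x i) := by
    rw [PiLp.inner_apply]
    refine Finset.sum_congr rfl fun i _ => ?_
    simp [RCLike.inner_apply, PiLp.sub_apply]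
    ring
  have hle : (inner ℝ gr (y-x) : ℝ) ≤ f y - f x := by
    rw [hφ0, hφ1] at hslope
    field_simp at hslope
    linarith
  rw [hinner] at hle
  have hsum : ∑ i, gr i * (x i - y i) = -∑ i, gr i * (y i - x i) := by
    rw [← Finset.sum_neg_distrib]
    exact Finset.sum_congr rfl fun i _ => by ring
  rw [hsum]
  linarith

set_option maxHeartbeats 2000000 in
/-- Convergence of AMSGrad with constant step size (Theorem C.4). -/
theorem stmt5 {d : ℕ} (T : ℕ) (hT : 1 ≤ T)
    (ℓ : ℕ → EuclideanSpace ℝ (Fin d) → ℝ)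
    (w g m : ℕ → EuclideanSpace ℝ (Fin d))
    (v vhat : ℕ → Fin d → ℝ)
    (wstar : EuclideanSpace ℝ (Fin d))
    (β1 β2 γ D G : ℝ)
    (hβ1 : β1 ∈ Set.Ioo (0 : ℝ) 1) (hβ2 : β2 ∈ Set.Ioo (0 : ℝ) 1)
    (hβ12 : β1 ^ 2 < β2) (hγ : 0 < γ)
    (hconv : ∀ t, 1 ≤ t → t ≤ T → ConvexOn ℝ Set.univ (ℓ t))
    (hgrad : ∀ t, 1 ≤ t → t ≤ T → HasGradientAt (ℓ t) (g t) (w t))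
    (hm0 : m 0 = 0)
    (hm : ∀ t, 1 ≤ t → t ≤ T → ∀ i,
      m t i = (β1 / Real.sqrt t) * m (t - 1) i + (1 - β1 / Real.sqrt t) * g t i)
    (hv : ∀ t, 1 ≤ t → t ≤ T → ∀ i,
      v t i = (1 - β2) * ∑ s ∈ Finset.Icc 1 t, β2 ^ (t - s) * g s i ^ 2)
    (hvhat : ∀ t, 1 ≤ t → t ≤ T → ∀ i,
      IsGreatest {x : ℝ | ∃ s, 1 ≤ s ∧ s ≤ t ∧ x = v s i} (vhat t i))
    (hupd : ∀ t, 1 ≤ t → t ≤ T → ∀ i,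
      w (t + 1) i = w t i -
        (γ / (1 - ∏ s ∈ Finset.Icc 1 t, (β1 / Real.sqrt s))) * m t i /
          Real.sqrt (vhat t i))
    (hD : ∀ t, 1 ≤ t → t ≤ T → ∀ i, |w t i - wstar i| ≤ D)
    (hG : ∀ t, 1 ≤ t → t ≤ T → ∀ i, |g t i| ≤ G)
    (hvpos : ∀ t, 1 ≤ t → t ≤ T → ∀ i, 0 < vhat t i)
    (hvmono : ∀ i, ∀ s t, 1 ≤ s → s ≤ t → t ≤ T →
      Real.sqrt (vhat s i) / γ ≤ Real.sqrt (vhat t i) / γ) :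
    (1 / (T : ℝ)) * ∑ t ∈ Finset.Icc 1 T, (ℓ t (w t) - ℓ t wstar) ≤
      d * D ^ 2 * G / (2 * T * γ * (1 - β1)) +
      2 * d * D * G * β1 / ((1 - β1) * Real.sqrt T) +
      d * G * γ * (β2 / ((1 - β2) * (β2 - β1 ^ 2))) / (2 * (1 - β1)) := by
  obtain ⟨hβ1a, hβ1b⟩ := hβ1
  obtain ⟨hβ2a, hβ2b⟩ := hβ2
  have hβ1' : 0 < 1 - β1 := by linarith
  have hβ2' : 0 < 1 - β2 := by linarith
  have h12 : 0 < β2 - β1^2 := by linarith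
  have hT0 : (0:ℝ) < T := by exact_mod_cast hT
  rcases Nat.eq_zero_or_pos d with hd | hd
  · -- degenerate case d = 0
    subst hd
    have hw : ∀ t, ℓ t (w t) - ℓ t wstar = 0 := by
      intro t
      have hwt : w t = wstar := by
        ext i
        exact i.elim0
      rw [hwt]; ring
    simp only [hw, Finset.sum_const, smul_zero, mul_zero, Nat.cast_zero]
    norm_num
  -- main case : d ≥ 1
  · have i0 : Fin d := ⟨0, hd⟩
    have hG0 : 0 ≤ G := le_trans (abs_nonneg _) (hG 1 le_rfl hT i0)
    have hD0 : 0 ≤ D := le_trans (abs_nonneg _) (hD 1 le_rfl hT i0)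
    set C : ℝ := β2 / ((1 - β2) * (β2 - β1 ^ 2)) with hCdef
    have hC0 : 0 < C := by rw [hCdef]; positivity
    clear_value C
    -- |m t i| ≤ G
    have hmG : ∀ (i : Fin d) t, t ≤ T → |m t i| ≤ G := by
      intro i t
      induction t with
      | zero => intro _; rw [hm0]; simpa using hG0
      | succ n ih =>
        intro hT'
        have hn : n ≤ T := by omega
        have h := hm (n+1) (by omega) hT' i
        rw [Nat.add_sub_cancel] at h
        have hb0 := aux_b_pos β1 hβ1a (n+1) (by omega)
        have hble := aux_b_le β1 hβ1a (n+1) (by omega)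
        have hg := hG (n+1) (by omega) hT' i
        rw [h]
        calc |(β1 / Real.sqrt ((n+1:ℕ))) * m n i + (1 - β1 / Real.sqrt ((n+1:ℕ))) * g (n+1) i|
            ≤ (β1 / Real.sqrt ((n+1:ℕ))) * |m n i| + (1 - β1 / Real.sqrt ((n+1:ℕ))) * |g (n+1) i| := by
              refine le_trans (abs_add_le _ _) ?_
              rw [abs_mul, abs_mul, abs_of_pos hb0, abs_of_nonneg (show (0:ℝ) ≤ 1 - β1 / Real.sqrt ((n+1:ℕ)) by linarith)]
          _ ≤ (β1 / Real.sqrt ((n+1:ℕ))) * G + (1 - β1 / Real.sqrt ((n+1:ℕ))) * G := by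
              exact add_le_add (mul_le_mul_of_nonneg_left (ih hn) hb0.le)
                (mul_le_mul_of_nonneg_left hg (by linarith))
          _ = G := by ring
    -- second moment bound on m
    have hm2 : ∀ (i : Fin d) t, 1 ≤ t → t ≤ T →
        m t i^2 ≤ (β2/(β2-β1^2)) * ∑ s ∈ Icc 1 t, β2^(t-s) * g s i^2 := by
      intro i t ht1
      induction t, ht1 using Nat.le_induction with
      | base =>
        intro h1T
        have h := hm 1 le_rfl h1T i
        rw [show (1:ℕ) - 1 = 0 from rfl, hm0] at h
        norm_num [Real.sqrt_one] at h
        rw [show Icc 1 1 = {1} from rfl, Finset.sum_singleton]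
        norm_num
        rw [h]
        have hlam : 1 ≤ β2/(β2-β1^2) := by
          rw [le_div_iff₀ h12]; nlinarith
        nlinarith [sq_nonneg (g 1 i), sq_nonneg ((1-β1) * g 1 i), sq_nonneg β1,
          mul_le_mul_of_nonneg_right hlam (sq_nonneg (g 1 i)),
          mul_nonneg (mul_nonneg hβ1a.le (show (0:ℝ) ≤ 2 - β1 by linarith)) (sq_nonneg (g 1 i))]
      | succ n hn ih =>
        intro hT'
        have hnT : n ≤ T := by omega
        have hrec := aux_rec β2 (fun s => g s i^2) n
        have h := hm (n+1) (by omega) hT' i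
        rw [Nat.add_sub_cancel] at h
        have hb0 := aux_b_pos β1 hβ1a (n+1) (by omega)
        have hble := aux_b_le β1 hβ1a (n+1) (by omega)
        have hcombo := aux_sq_combo β1 β2 (β1/Real.sqrt ((n+1:ℕ))) (m n i) (g (n+1) i)
          hβ1a hβ12 hβ2b hb0.le hble (by linarith)
        have ihn := ih hnT
        rw [h, hrec]
        calc ((β1/Real.sqrt ((n+1:ℕ))) * m n i + (1 - β1/Real.sqrt ((n+1:ℕ))) * g (n+1) i)^2
            ≤ β2 * m n i^2 + (β2/(β2-β1^2)) * g (n+1) i^2 := hcombo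
          _ ≤ β2 * ((β2/(β2-β1^2)) * ∑ s ∈ Icc 1 n, β2^(n-s) * g s i^2)
              + (β2/(β2-β1^2)) * g (n+1) i^2 := by
              have := mul_le_mul_of_nonneg_left ihn hβ2a.le
              linarith
          _ = (β2/(β2-β1^2)) * (β2 * (∑ s ∈ Icc 1 n, β2^(n-s) * g s i^2) + g (n+1) i^2) := by
              ring
    -- sqrt (vhat) ≤ G
    have hvG : ∀ (i : Fin d) t, 1 ≤ t → t ≤ T → Real.sqrt (vhat t i) ≤ G := by
      intro i t ht1 htT
      obtain ⟨s, hs1, hst, heq⟩ := (hvhat t ht1 htT i).1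
      have hsT : s ≤ T := le_trans hst htT
      have hvs := hv s hs1 hsT i
      have hsum : ∑ u ∈ Icc 1 s, β2^(s-u) * g u i^2 ≤ ∑ u ∈ Icc 1 s, β2^(s-u) * G^2 := by
        apply Finset.sum_le_sum
        intro u hu
        obtain ⟨hu1, hus⟩ := Finset.mem_Icc.mp hu
        have hgu := hG u hu1 (le_trans hus hsT) i
        have h2 : g u i^2 ≤ G^2 := by nlinarith [abs_nonneg (g u i), sq_abs (g u i)]
        exact mul_le_mul_of_nonneg_left h2 (by positivity)
      have hgeom := aux_geom β2 hβ2a.le hβ2b s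
      have hle : vhat t i ≤ G^2 := by
        rw [heq, hvs]
        calc (1-β2) * ∑ u ∈ Icc 1 s, β2^(s-u) * g u i^2
            ≤ (1-β2) * ∑ u ∈ Icc 1 s, β2^(s-u) * G^2 := by
              exact mul_le_mul_of_nonneg_left hsum hβ2'.le
          _ = ((1-β2) * ∑ u ∈ Icc 1 s, β2^(s-u)) * G^2 := by
              rw [← Finset.sum_mul]; ring
          _ ≤ 1 * G^2 := mul_le_mul_of_nonneg_right hgeom (by positivity)
          _ = G^2 := one_mul _
      calc Real.sqrt (vhat t i) ≤ Real.sqrt (G^2) := Real.sqrt_le_sqrt hle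
        _ = G := Real.sqrt_sq hG0
    -- m² ≤ C * vhat
    have hm2v : ∀ (i : Fin d) t, 1 ≤ t → t ≤ T → m t i^2 ≤ C * vhat t i := by
      intro i t ht1 htT
      have h1 := hm2 i t ht1 htT
      have h2 := hv t ht1 htT i
      have h3 : v t i ≤ vhat t i := (hvhat t ht1 htT i).2 ⟨t, ht1, le_rfl, rfl⟩
      calc m t i^2 ≤ (β2/(β2-β1^2)) * ∑ s ∈ Icc 1 t, β2^(t-s) * g s i^2 := h1
        _ = C * v t i := by rw [h2, hCdef]; field_simp
        _ ≤ C * vhat t i := mul_le_mul_of_nonneg_left h3 hC0.le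
    -- per-step bound for the second term
    have hsqrt1 : Real.sqrt ((1:ℕ):ℝ) = 1 := by norm_num
    have hA : ∀ (i : Fin d) t, 1 ≤ t → t ≤ T →
        γ/(1 - auxP β1 t) * m t i^2 / ((1 - β1/Real.sqrt t) * Real.sqrt (vhat t i)) ≤
          γ*G*C/(1-β1) := by
      intro i t ht1 htT
      rcases eq_or_lt_of_le ht1 with h1 | h2
      · -- t = 1
        subst h1
        have hm1 : m 1 i = (1-β1) * g 1 i := by
          have h := hm 1 le_rfl htT i
          rw [show (1:ℕ) - 1 = 0 from rfl, hm0] at h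
          norm_num [Real.sqrt_one] at h
          exact h
        have hv1 : vhat 1 i = (1-β2) * g 1 i^2 := by
          obtain ⟨s, hs1, hs2, heq⟩ := (hvhat 1 le_rfl htT i).1
          have hseq : s = 1 := by omega
          subst hseq
          rw [heq, hv 1 le_rfl htT i]
          rw [show Icc 1 1 = {1} from rfl, Finset.sum_singleton]
          norm_num
        have hg2 : 0 < g 1 i^2 := by
          have := hvpos 1 le_rfl htT i
          rw [hv1] at this
          nlinarith
        set a : ℝ := |g 1 i| with hadef
        have ha0 : 0 < a := by rw [hadef, abs_pos]; intro hcon; rw [hcon] at hg2; simp at hg2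
        have ha2 : a^2 = g 1 i^2 := sq_abs _
        set s2 : ℝ := Real.sqrt (1-β2) with hs2def
        have hs2pos : 0 < s2 := Real.sqrt_pos.mpr hβ2'
        have hs2le : s2 ≤ 1 := Real.sqrt_le_one.mpr (by linarith)
        have hs2sq : s2 * s2 = 1-β2 := Real.mul_self_sqrt hβ2'.le
        have hsq1v : Real.sqrt (vhat 1 i) = s2 * a := by
          rw [hv1, Real.sqrt_mul hβ2'.le, Real.sqrt_sq_eq_abs]
        have hgG : a ≤ G := hG 1 le_rfl htT i
        have heq1 : γ/(1 - auxP β1 1) * m 1 i^2 / ((1 - β1/Real.sqrt (1:ℕ)) * Real.sqrt (vhat 1 i))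
            = γ * a / s2 := by
          rw [auxP_one, hsqrt1, hsq1v, hm1, div_one]
          rw [mul_pow, ← ha2]
          field_simp
        rw [heq1]
        have h1 : γ * a / s2 ≤ γ * G / s2 := by
          apply div_le_div₀ (by positivity) (mul_le_mul_of_nonneg_left hgG hγ.le) hs2pos le_rfl
        refine h1.trans ?_
        rw [div_le_div_iff₀ hs2pos hβ1']
        have hCs : (1-β1)*((1-β2)*(β2-β1^2)) ≤ β2*s2 := by
          have e1 : (1-β1)*s2 ≤ 1 := by nlinarith
          have e2 : (1-β1)*((1-β2)*(β2-β1^2)) = ((1-β1)*s2) * (s2*(β2-β1^2)) := by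
            rw [← hs2sq]; ring
          calc (1-β1)*((1-β2)*(β2-β1^2)) = ((1-β1)*s2) * (s2*(β2-β1^2)) := e2
            _ ≤ 1 * (s2*(β2-β1^2)) := by
                apply mul_le_mul_of_nonneg_right e1 (by positivity)
            _ = s2*(β2-β1^2) := one_mul _
            _ ≤ s2*β2 := by nlinarith
            _ = β2*s2 := mul_comm _ _
        have hCs2 : (1-β1) ≤ C * s2 := by
          rw [hCdef, div_mul_eq_mul_div, le_div_iff₀ (by positivity)]
          linarith [hCs]
        calc γ * G * (1-β1) ≤ γ * G * (C * s2) := by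
              apply mul_le_mul_of_nonneg_left hCs2 (by positivity)
          _ = γ*G*C*s2 := by ring
      · -- t ≥ 2
        have ht2 : 2 ≤ t := h2
        have hkey := aux_key2 β1 hβ1a hβ1b t ht2
        have hmv := hm2v i t ht1 htT
        have hvp := hvpos t ht1 htT i
        have hs0 : 0 < Real.sqrt (vhat t i) := Real.sqrt_pos.mpr hvp
        have h1P : 0 < 1 - auxP β1 t := by
          linarith [(auxP_bounds β1 hβ1a hβ1b t ht1).2]
        have h1b : 0 < 1 - β1/Real.sqrt t := by
          linarith [aux_b_le β1 hβ1a t ht1]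
        have hγC : 0 ≤ γ * C := mul_nonneg hγ.le hC0.le
        have hss : Real.sqrt (vhat t i) * Real.sqrt (vhat t i) = vhat t i :=
          Real.mul_self_sqrt hvp.le
        calc γ/(1 - auxP β1 t) * m t i^2 / ((1 - β1/Real.sqrt t) * Real.sqrt (vhat t i))
            = γ * m t i^2 / ((1 - auxP β1 t) * (1 - β1/Real.sqrt t) * Real.sqrt (vhat t i)) := by
              field_simp
          _ ≤ γ * (C * vhat t i) / ((1-β1) * Real.sqrt (vhat t i)) := by
              apply div_le_div₀ (mul_nonneg hγ.le (mul_nonneg hC0.le hvp.le))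
                (mul_le_mul_of_nonneg_left hmv hγ.le) (by positivity)
              calc (1-β1) * Real.sqrt (vhat t i)
                  ≤ ((1 - auxP β1 t) * (1 - β1/Real.sqrt t)) * Real.sqrt (vhat t i) :=
                    mul_le_mul_of_nonneg_right hkey hs0.le
                _ = (1 - auxP β1 t) * (1 - β1/Real.sqrt t) * Real.sqrt (vhat t i) := by ring
          _ = γ * C * (vhat t i / Real.sqrt (vhat t i)) / (1-β1) := by
              have hne1 : (1-β1) ≠ 0 := ne_of_gt hβ1'
              have hne2 : Real.sqrt (vhat t i) ≠ 0 := ne_of_gt hs0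
              field_simp
          _ = γ * C * Real.sqrt (vhat t i) / (1-β1) := by rw [Real.div_sqrt]
          _ ≤ γ * C * G / (1-β1) := by
              apply div_le_div₀ (mul_nonneg hγC hG0)
                (mul_le_mul_of_nonneg_left (hvG i t ht1 htT) hγC) hβ1' le_rfl
          _ = γ*G*C/(1-β1) := by ring
    -- per-coordinate regret bound
    have hcoord : ∀ i : Fin d, ∑ t ∈ Icc 1 T, g t i * (w t i - wstar i) ≤
        D^2*G/(2*γ*(1-β1)) + (T:ℝ)*(γ*G*C/(2*(1-β1))) + 2*Real.sqrt T*(β1*G*D/(1-β1)) := by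
      intro i
      have hpt : ∀ t ∈ Icc 1 T, g t i * (w t i - wstar i) ≤
          ((w t i - wstar i)^2 - (w (t+1) i - wstar i)^2) *
            ((Real.sqrt (vhat t i) * (1 - auxP β1 t) / γ) / (1 - β1/Real.sqrt t)) / 2
          + γ*G*C/(2*(1-β1)) + (β1*G*D/(1-β1)) * (Real.sqrt t)⁻¹ := by
        intro t htm
        obtain ⟨ht1, htT⟩ := Finset.mem_Icc.mp htm
        have hPt := auxP_bounds β1 hβ1a hβ1b t ht1
        have hbt0 := aux_b_pos β1 hβ1a t ht1
        have hbtle := aux_b_le β1 hβ1a t ht1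
        have hst1 := aux_sqrt_one_le t ht1
        have hst0 : 0 < Real.sqrt (vhat t i) := Real.sqrt_pos.mpr (hvpos t ht1 htT i)
        have h1P : 0 < 1 - auxP β1 t := by linarith [hPt.2]
        have h1b : 0 < 1 - β1/Real.sqrt t := by linarith
        have hup : w (t+1) i = w t i - γ/(1 - auxP β1 t) * m t i / Real.sqrt (vhat t i) :=
          hupd t ht1 htT i
        have hgm := hm t ht1 htT i
        have hg' : g t i = (m t i - (β1/Real.sqrt t) * m (t-1) i)/(1 - β1/Real.sqrt t) := by
          rw [eq_div_iff (ne_of_gt h1b)]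
          linarith [hgm]
        have hid : g t i * (w t i - wstar i) =
            ((w t i - wstar i)^2 - (w (t+1) i - wstar i)^2) *
              ((Real.sqrt (vhat t i) * (1 - auxP β1 t) / γ) / (1 - β1/Real.sqrt t)) / 2
            + γ/(1 - auxP β1 t) * m t i^2 / ((1 - β1/Real.sqrt t) * Real.sqrt (vhat t i)) / 2
            - (β1/Real.sqrt t) * m (t-1) i * (w t i - wstar i) / (1 - β1/Real.sqrt t) := by
          rw [hg', hup]
          have hne1 : Real.sqrt (vhat t i) ≠ 0 := ne_of_gt hst0
          have hne2 : (1 - auxP β1 t) ≠ 0 := ne_of_gt h1P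
          have hne3 : (1 - β1/Real.sqrt t) ≠ 0 := ne_of_gt h1b
          have hne4 : γ ≠ 0 := ne_of_gt hγ
          have hne5 : Real.sqrt t ≠ 0 := by positivity
          have hne6 : Real.sqrt t - β1 ≠ 0 := by
            have : (0:ℝ) < Real.sqrt t - β1 := by linarith
            exact ne_of_gt this
          field_simp
          ring
        have hAt := hA i t ht1 htT
        have hm' : |m (t-1) i| ≤ G := hmG i (t-1) (by omega)
        have hΔt := hD t ht1 htT i
        have hcross : -((β1/Real.sqrt t) * m (t-1) i * (w t i - wstar i) / (1 - β1/Real.sqrt t))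
            ≤ (β1*G*D/(1-β1)) * (Real.sqrt t)⁻¹ := by
          have habs : |(β1/Real.sqrt t) * m (t-1) i * (w t i - wstar i) / (1 - β1/Real.sqrt t)|
              ≤ (β1*G*D/(1-β1)) * (Real.sqrt t)⁻¹ := by
            rw [abs_div, abs_of_pos h1b, abs_mul, abs_mul, abs_of_pos hbt0]
            have hnum : (β1/Real.sqrt t) * |m (t-1) i| * |w t i - wstar i|
                ≤ (β1/Real.sqrt t) * G * D := by
              apply mul_le_mul (mul_le_mul_of_nonneg_left hm' hbt0.le) hΔt (abs_nonneg _)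
                (mul_nonneg hbt0.le hG0)
            calc (β1/Real.sqrt t) * |m (t-1) i| * |w t i - wstar i| / (1 - β1/Real.sqrt t)
                ≤ (β1/Real.sqrt t) * G * D / (1 - β1) := by
                  apply div_le_div₀ (mul_nonneg (mul_nonneg hbt0.le hG0) hD0) hnum hβ1'
                    (by linarith)
              _ = (β1*G*D/(1-β1)) * (Real.sqrt t)⁻¹ := by ring
          linarith [neg_abs_le ((β1/Real.sqrt t) * m (t-1) i * (w t i - wstar i) /
            (1 - β1/Real.sqrt t)), habs]
        rw [hid]
        have hAt2 : γ/(1 - auxP β1 t) * m t i^2 /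
            ((1 - β1/Real.sqrt t) * Real.sqrt (vhat t i)) / 2 ≤ γ*G*C/(2*(1-β1)) := by
          rw [show γ*G*C/(2*(1-β1)) = (γ*G*C/(1-β1))/2 from by rw [div_div, mul_comm 2 (1-β1)]]
          linarith
        linarith
      refine le_trans (Finset.sum_le_sum hpt) ?_
      rw [Finset.sum_add_distrib, Finset.sum_add_distrib]
      have hS2 : ∑ _t ∈ Icc 1 T, γ*G*C/(2*(1-β1)) = (T:ℝ)*(γ*G*C/(2*(1-β1))) := by
        rw [Finset.sum_const, Nat.card_Icc]
        simp
      have hS3 : ∑ t ∈ Icc 1 T, (β1*G*D/(1-β1)) * (Real.sqrt t)⁻¹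
          ≤ 2*Real.sqrt T*(β1*G*D/(1-β1)) := by
        rw [← Finset.mul_sum]
        calc (β1*G*D/(1-β1)) * ∑ t ∈ Icc 1 T, (Real.sqrt t)⁻¹
            ≤ (β1*G*D/(1-β1)) * (2*Real.sqrt T) :=
              mul_le_mul_of_nonneg_left (aux_sqrt_sum T) (by positivity)
          _ = 2*Real.sqrt T*(β1*G*D/(1-β1)) := by ring
      have hS1 : ∑ t ∈ Icc 1 T, ((w t i - wstar i)^2 - (w (t+1) i - wstar i)^2) *
            ((Real.sqrt (vhat t i) * (1 - auxP β1 t) / γ) / (1 - β1/Real.sqrt t)) / 2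
          ≤ D^2*G/(2*γ*(1-β1)) := by
        have habel := aux_abel T hT (fun t => w t i - wstar i)
            (fun t => Real.sqrt (vhat t i) * (1 - auxP β1 t) / γ)
            (fun t => β1 / Real.sqrt t) D β1 hβ1b
            (by norm_num)
            (fun t ht _ => ⟨(aux_b_pos β1 hβ1a t ht).le, aux_b_le β1 hβ1a t ht⟩)
            (fun t ht _ => by
              show β1 / Real.sqrt ((t+1:ℕ)) ≤ β1 / Real.sqrt t
              have h1 : Real.sqrt t ≤ Real.sqrt ((t+1:ℕ)) :=
                Real.sqrt_le_sqrt (by exact_mod_cast Nat.le_succ t)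
              have h0 : 0 < Real.sqrt t := lt_of_lt_of_le one_pos (aux_sqrt_one_le t ht)
              exact div_le_div_of_nonneg_left hβ1a.le h0 h1)
            (fun t ht htT => by
              show 0 ≤ Real.sqrt (vhat t i) * (1 - auxP β1 t) / γ
              have h1 := (auxP_bounds β1 hβ1a hβ1b t ht).2
              have h0 : (0:ℝ) ≤ Real.sqrt (vhat t i) := Real.sqrt_nonneg _
              apply div_nonneg (mul_nonneg h0 (by linarith)) hγ.le)
            (fun t ht htT => by
              show Real.sqrt (vhat t i) * (1 - auxP β1 t) / γ ≤
                Real.sqrt (vhat (t+1) i) * (1 - auxP β1 (t+1)) / γ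
              have hmono := hvmono i t (t+1) ht (Nat.le_succ t) htT
              have hP2 : auxP β1 (t+1) ≤ auxP β1 t := by
                rw [auxP_succ]
                have h1 := (auxP_bounds β1 hβ1a hβ1b t ht).1
                have h2 := aux_b_pos β1 hβ1a (t+1) (by omega)
                have h3 := aux_b_le β1 hβ1a (t+1) (by omega)
                nlinarith
              have hPub := (auxP_bounds β1 hβ1a hβ1b t ht).2
              have e1 : ∀ u : ℕ, Real.sqrt (vhat u i) * (1 - auxP β1 u)/γ =
                  (Real.sqrt (vhat u i)/γ) * (1 - auxP β1 u) := fun u => by ring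
              rw [e1, e1]
              apply mul_le_mul hmono (by linarith) (by linarith) (by positivity))
            (fun t ht htT => by
              show (w t i - wstar i)^2 ≤ D^2
              have h := abs_le.mp (hD t ht htT i)
              nlinarith [h.1, h.2])
        beta_reduce at habel
        have hxT : Real.sqrt (vhat T i) * (1 - auxP β1 T) / γ ≤ G/γ := by
          apply div_le_div₀ hG0 ?_ hγ le_rfl
          nlinarith [hvG i T hT le_rfl, (auxP_bounds β1 hβ1a hβ1b T hT).1,
            (auxP_bounds β1 hβ1a hβ1b T hT).2, Real.sqrt_nonneg (vhat T i)]
        rw [← Finset.sum_div]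
        have h2 : D^2 * (Real.sqrt (vhat T i) * (1 - auxP β1 T) / γ) / (1-β1)
            ≤ D^2 * (G/γ)/(1-β1) := by
          apply div_le_div₀ (by positivity)
            (mul_le_mul_of_nonneg_left hxT (sq_nonneg D)) hβ1' le_rfl
        calc (∑ t ∈ Icc 1 T, ((w t i - wstar i)^2 - (w (t+1) i - wstar i)^2) *
              ((Real.sqrt (vhat t i) * (1 - auxP β1 t) / γ) / (1 - β1/Real.sqrt t)))/2
            ≤ (D^2 * (Real.sqrt (vhat T i) * (1 - auxP β1 T) / γ) / (1-β1))/2 := by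
              linarith [habel]
          _ ≤ (D^2*(G/γ)/(1-β1))/2 := by linarith
          _ = D^2*G/(2*γ*(1-β1)) := by
              field_simp
      exact add_le_add (add_le_add hS1 (le_of_eq hS2)) hS3
    -- global bound
    have hglobal : ∑ t ∈ Icc 1 T, (ℓ t (w t) - ℓ t wstar) ≤
        (d:ℝ) * (D^2*G/(2*γ*(1-β1)) + (T:ℝ)*(γ*G*C/(2*(1-β1))) +
          2*Real.sqrt T*(β1*G*D/(1-β1))) := by
      calc ∑ t ∈ Icc 1 T, (ℓ t (w t) - ℓ t wstar)
          ≤ ∑ t ∈ Icc 1 T, ∑ i : Fin d, g t i * (w t i - wstar i) := by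
            apply Finset.sum_le_sum
            intro t htm
            obtain ⟨ht1, htT⟩ := Finset.mem_Icc.mp htm
            exact aux_convex_grad (ℓ t) (g t) (w t) wstar (hconv t ht1 htT) (hgrad t ht1 htT)
        _ = ∑ i : Fin d, ∑ t ∈ Icc 1 T, g t i * (w t i - wstar i) := Finset.sum_comm
        _ ≤ ∑ _i : Fin d, (D^2*G/(2*γ*(1-β1)) + (T:ℝ)*(γ*G*C/(2*(1-β1))) +
              2*Real.sqrt T*(β1*G*D/(1-β1))) := Finset.sum_le_sum (fun i _ => hcoord i)
        _ = (d:ℝ) * (D^2*G/(2*γ*(1-β1)) + (T:ℝ)*(γ*G*C/(2*(1-β1))) +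
              2*Real.sqrt T*(β1*G*D/(1-β1))) := by
            rw [Finset.sum_const, Finset.card_univ, Fintype.card_fin, nsmul_eq_mul]
    -- final arithmetic
    set sT : ℝ := Real.sqrt T with hsTdef
    have hsT : 0 < sT := Real.sqrt_pos.mpr hT0
    have hsTT : (T:ℝ) = sT * sT := (Real.mul_self_sqrt hT0.le).symm
    calc (1/(T:ℝ)) * ∑ t ∈ Icc 1 T, (ℓ t (w t) - ℓ t wstar)
        ≤ (1/(T:ℝ)) * ((d:ℝ) * (D^2*G/(2*γ*(1-β1)) + (T:ℝ)*(γ*G*C/(2*(1-β1))) +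
            2*sT*(β1*G*D/(1-β1)))) := by
          apply mul_le_mul_of_nonneg_left hglobal (by positivity)
      _ = (d:ℝ) * D ^ 2 * G / (2 * (T:ℝ) * γ * (1 - β1)) +
          2 * (d:ℝ) * D * G * β1 / ((1 - β1) * sT) +
          (d:ℝ) * G * γ * C / (2 * (1 - β1)) := by
          rw [hsTT]
          have hne : sT ≠ 0 := ne_of_gt hsT
          field_simp
          ring
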